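/- Define b̂ : K → K by b̂(x) := b(x) + (1/2) Σ_{m=1}^∞ λ_m² Dσ_m(x)[σ(x)e_m], where σ_m : K → K is the map σ_m(x) := σ(x)e_m and Dσ_m(x) is its Fréchet derivative at x. Then for every x ∈ K the series converges absolutely in K, and b̂ is Lipschitz continuous on K. -/

import Mathlib

/-- The corrected drift
`b̂(x) = b(x) + (1/2) Σₘ λₘ² Dσₘ(x)[σ(x)eₘ]` (with `σₘ(x) = σ(x)eₘ`) is given by an
absolutely convergent series and is Lipschitz continuous on `K`. -/
theorem corrected_drift_lipschitz
    {K H : Type*}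
    [NormedAddCommGroup K] [InnerProductSpace ℝ K] [CompleteSpace K]
    [TopologicalSpace.SeparableSpace K]
    [NormedAddCommGroup H] [InnerProductSpace ℝ H] [CompleteSpace H]
    [TopologicalSpace.SeparableSpace H]
    (e : HilbertBasis ℕ ℝ H)
    (lam : ℕ → ℝ) (hlam : Summable fun m => lam m ^ 2)
    (b : K → K) (L_b : NNReal) (hb : LipschitzWith L_b b)
    (σ : K → H →L[ℝ] K) (hσ : ContDiff ℝ 2 σ)
    (C_σ : ℝ)
    (hσ_bd : ∀ x : K, ‖σ x‖ ≤ C_σ)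
    (hDσ_bd : ∀ x : K, ‖fderiv ℝ σ x‖ ≤ C_σ)
    (hD2σ_bd : ∀ x : K, @Norm.norm _ ContinuousLinearMap.hasOpNorm (fderiv ℝ (fderiv ℝ σ) x) ≤ C_σ) :
    (∀ x : K,
      Summable fun m =>
        ‖lam m ^ 2 • (fderiv ℝ (fun y : K => (σ y) (e m)) x) ((σ x) (e m))‖) ∧
    ∃ L : NNReal,
      LipschitzWith L (fun x : K =>
        b x + (1 / 2 : ℝ) •
          ∑' m, lam m ^ 2 • (fderiv ℝ (fun y : K => (σ y) (e m)) x) ((σ x) (e m))) := by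
  have hC0 : 0 ≤ C_σ := le_trans (norm_nonneg _) (hσ_bd 0)
  have hσdiff : Differentiable ℝ σ := hσ.differentiable (by norm_num)
  have hDσdiff : Differentiable ℝ (fderiv ℝ σ) :=
    (hσ.fderiv_right (m := 1) (by norm_num)).differentiable one_ne_zero
  have hem : ∀ m : ℕ, ‖(e m : H)‖ = 1 := fun m => e.orthonormal.1 m
  -- identify the derivative of `y ↦ σ y (e m)`
  have key : ∀ (m : ℕ) (x : K),
      fderiv ℝ (fun y : K => (σ y) (e m)) x
        = (ContinuousLinearMap.apply ℝ K (e m)).comp (fderiv ℝ σ x) := by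
    intro m x
    exact (((ContinuousLinearMap.apply ℝ K (e m)).hasFDerivAt).comp x
      (hσdiff x).hasFDerivAt).fderiv
  -- the term of the series
  set T : ℕ → K → K := fun m x =>
    lam m ^ 2 • (fderiv ℝ (fun y : K => (σ y) (e m)) x) ((σ x) (e m)) with hT
  have hTval : ∀ m x, T m x = lam m ^ 2 • ((fderiv ℝ σ x) ((σ x) (e m))) (e m) := by
    intro m x; simp [hT, key]
  -- basic application bound
  have happ : ∀ (x : K) (u : K) (v : H),
      ‖(fderiv ℝ σ x u) v‖ ≤ C_σ * ‖u‖ * ‖v‖ := by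
    intro x u v
    calc ‖(fderiv ℝ σ x u) v‖ ≤ ‖fderiv ℝ σ x u‖ * ‖v‖ :=
          (fderiv ℝ σ x u).le_opNorm v
      _ ≤ (‖fderiv ℝ σ x‖ * ‖u‖) * ‖v‖ := by
          gcongr; exact (fderiv ℝ σ x).le_opNorm u
      _ ≤ (C_σ * ‖u‖) * ‖v‖ := by gcongr; exact hDσ_bd x
  have hσem : ∀ (x : K) (m : ℕ), ‖(σ x) (e m)‖ ≤ C_σ := by
    intro x m
    calc ‖(σ x) (e m)‖ ≤ ‖σ x‖ * ‖(e m : H)‖ := (σ x).le_opNorm _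
      _ = ‖σ x‖ := by rw [hem, mul_one]
      _ ≤ C_σ := hσ_bd x
  -- norm bound on each term
  have hTbd : ∀ m x, ‖T m x‖ ≤ lam m ^ 2 * (C_σ * C_σ) := by
    intro m x
    rw [hTval, norm_smul]
    have h1 : ‖((fderiv ℝ σ x) ((σ x) (e m))) (e m)‖ ≤ C_σ * C_σ := by
      calc ‖((fderiv ℝ σ x) ((σ x) (e m))) (e m)‖
          ≤ C_σ * ‖(σ x) (e m)‖ * ‖(e m : H)‖ := happ x _ _
        _ = C_σ * ‖(σ x) (e m)‖ := by rw [hem, mul_one]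
        _ ≤ C_σ * C_σ := by gcongr; exact hσem x m
    have h2 : ‖lam m ^ 2‖ = lam m ^ 2 := by
      rw [Real.norm_eq_abs, abs_of_nonneg (sq_nonneg _)]
    rw [h2]
    exact mul_le_mul_of_nonneg_left h1 (sq_nonneg _)
  -- summability of norms
  have hsummN : ∀ x : K, Summable fun m => ‖T m x‖ := by
    intro x
    exact (hlam.mul_right (C_σ * C_σ)).of_nonneg_of_le
      (fun m => norm_nonneg _) (fun m => hTbd m x)
  have hsumm : ∀ x : K, Summable fun m => T m x := fun x => (hsummN x).of_norm
  refine ⟨hsummN, ?_⟩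
  -- Lipschitz bounds for σ and fderiv σ
  have hσLip : ∀ x y : K, ‖σ x - σ y‖ ≤ C_σ * ‖x - y‖ := by
    intro x y
    exact convex_univ.norm_image_sub_le_of_norm_fderiv_le
      (fun z _ => hσdiff z) (fun z _ => hDσ_bd z) (Set.mem_univ y) (Set.mem_univ x)
  have hDσLip : ∀ x y : K, ‖fderiv ℝ σ x - fderiv ℝ σ y‖ ≤ C_σ * ‖x - y‖ := by
    intro x y
    letI i1 : NormedAddCommGroup (K →L[ℝ] H →L[ℝ] K) := inferInstance
    letI i2 : NormedSpace ℝ (K →L[ℝ] H →L[ℝ] K) := inferInstance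
    exact convex_univ.norm_image_sub_le_of_norm_fderiv_le
      (fun z _ => hDσdiff z) (fun z _ => hD2σ_bd z) (Set.mem_univ y) (Set.mem_univ x)
  -- per-term Lipschitz estimate
  have hTdiff : ∀ (m : ℕ) (x y : K),
      ‖T m x - T m y‖ ≤ lam m ^ 2 * (2 * (C_σ * C_σ)) * ‖x - y‖ := by
    intro m x y
    rw [hTval, hTval, ← smul_sub, norm_smul]
    have h2 : ‖lam m ^ 2‖ = lam m ^ 2 := by
      rw [Real.norm_eq_abs, abs_of_nonneg (sq_nonneg _)]
    rw [h2]
    have hsplit :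
        ((fderiv ℝ σ x) ((σ x) (e m))) (e m) - ((fderiv ℝ σ y) ((σ y) (e m))) (e m)
        = ((fderiv ℝ σ x) ((σ x) (e m) - (σ y) (e m))) (e m)
          + ((fderiv ℝ σ x - fderiv ℝ σ y) ((σ y) (e m))) (e m) := by
      simp [map_sub, ContinuousLinearMap.sub_apply]
      try abel
    have hbound :
        ‖((fderiv ℝ σ x) ((σ x) (e m))) (e m) - ((fderiv ℝ σ y) ((σ y) (e m))) (e m)‖
        ≤ 2 * (C_σ * C_σ) * ‖x - y‖ := by
      rw [hsplit]
      have hA : ‖((fderiv ℝ σ x) ((σ x) (e m) - (σ y) (e m))) (e m)‖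
          ≤ C_σ * C_σ * ‖x - y‖ := by
        have := happ x ((σ x) (e m) - (σ y) (e m)) (e m)
        rw [hem, mul_one] at this
        refine this.trans ?_
        have : ‖(σ x) (e m) - (σ y) (e m)‖ ≤ C_σ * ‖x - y‖ := by
          have h3 : (σ x) (e m) - (σ y) (e m) = (σ x - σ y) (e m) := by
            simp [ContinuousLinearMap.sub_apply]
          rw [h3]
          calc ‖(σ x - σ y) (e m)‖ ≤ ‖σ x - σ y‖ * ‖(e m : H)‖ :=
                (σ x - σ y).le_opNorm _
            _ = ‖σ x - σ y‖ := by rw [hem, mul_one]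
            _ ≤ C_σ * ‖x - y‖ := hσLip x y
        calc C_σ * ‖(σ x) (e m) - (σ y) (e m)‖ ≤ C_σ * (C_σ * ‖x - y‖) := by
              gcongr
          _ = C_σ * C_σ * ‖x - y‖ := by ring
      have hB : ‖((fderiv ℝ σ x - fderiv ℝ σ y) ((σ y) (e m))) (e m)‖
          ≤ C_σ * C_σ * ‖x - y‖ := by
        calc ‖((fderiv ℝ σ x - fderiv ℝ σ y) ((σ y) (e m))) (e m)‖
            ≤ ‖(fderiv ℝ σ x - fderiv ℝ σ y) ((σ y) (e m))‖ * ‖(e m : H)‖ :=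
              ((fderiv ℝ σ x - fderiv ℝ σ y) ((σ y) (e m))).le_opNorm _
          _ = ‖(fderiv ℝ σ x - fderiv ℝ σ y) ((σ y) (e m))‖ := by rw [hem, mul_one]
          _ ≤ ‖fderiv ℝ σ x - fderiv ℝ σ y‖ * ‖(σ y) (e m)‖ :=
              (fderiv ℝ σ x - fderiv ℝ σ y).le_opNorm _
          _ ≤ (C_σ * ‖x - y‖) * C_σ := by
              gcongr
              · exact hDσLip x y
              · exact hσem y m
          _ = C_σ * C_σ * ‖x - y‖ := by ring
      calc ‖_ + _‖ ≤ _ + _ := norm_add_le _ _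
        _ ≤ C_σ * C_σ * ‖x - y‖ + C_σ * C_σ * ‖x - y‖ := add_le_add hA hB
        _ = 2 * (C_σ * C_σ) * ‖x - y‖ := by ring
    calc lam m ^ 2 * ‖_ - _‖ ≤ lam m ^ 2 * (2 * (C_σ * C_σ) * ‖x - y‖) :=
          mul_le_mul_of_nonneg_left hbound (sq_nonneg _)
      _ = lam m ^ 2 * (2 * (C_σ * C_σ)) * ‖x - y‖ := by ring
  -- Lipschitz bound for the series
  set S : ℝ := ∑' m, lam m ^ 2 with hS
  have hS0 : 0 ≤ S := tsum_nonneg fun m => sq_nonneg _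
  have hFLip : ∀ x y : K,
      ‖(∑' m, T m x) - (∑' m, T m y)‖ ≤ S * (2 * (C_σ * C_σ)) * ‖x - y‖ := by
    intro x y
    rw [← Summable.tsum_sub (hsumm x) (hsumm y)]
    have hsd : Summable fun m => ‖T m x - T m y‖ :=
      ((hlam.mul_right (2 * (C_σ * C_σ))).mul_right ‖x - y‖).of_nonneg_of_le
        (fun m => norm_nonneg _) (fun m => by simpa [mul_assoc] using hTdiff m x y)
    calc ‖∑' m, (T m x - T m y)‖ ≤ ∑' m, ‖T m x - T m y‖ :=
          norm_tsum_le_tsum_norm hsd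
      _ ≤ ∑' m, lam m ^ 2 * (2 * (C_σ * C_σ)) * ‖x - y‖ := by
          refine Summable.tsum_le_tsum (fun m => hTdiff m x y) hsd ?_
          exact (hlam.mul_right (2 * (C_σ * C_σ))).mul_right ‖x - y‖
      _ = S * (2 * (C_σ * C_σ)) * ‖x - y‖ := by
          rw [hS]
          rw [tsum_mul_right, tsum_mul_right]
  -- assemble
  refine ⟨L_b + (S * (C_σ * C_σ)).toNNReal, LipschitzWith.of_dist_le_mul ?_⟩
  intro x y
  have hco : ((L_b + (S * (C_σ * C_σ)).toNNReal : NNReal) : ℝ)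
      = (L_b : ℝ) + S * (C_σ * C_σ) := by
    push_cast
    rw [Real.coe_toNNReal _ (mul_nonneg hS0 (mul_nonneg hC0 hC0))]
  rw [dist_eq_norm, dist_eq_norm, hco]
  have hbn : ‖b x - b y‖ ≤ (L_b : ℝ) * ‖x - y‖ := by
    have := hb.dist_le_mul x y
    rwa [dist_eq_norm, dist_eq_norm] at this
  calc ‖(b x + (1 / 2 : ℝ) • ∑' m, T m x) - (b y + (1 / 2 : ℝ) • ∑' m, T m y)‖
      = ‖(b x - b y) + (1 / 2 : ℝ) • ((∑' m, T m x) - (∑' m, T m y))‖ := by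
        rw [smul_sub]; ring_nf
        congr 1
        abel
    _ ≤ ‖b x - b y‖ + ‖(1 / 2 : ℝ) • ((∑' m, T m x) - (∑' m, T m y))‖ :=
        norm_add_le _ _
    _ ≤ (L_b : ℝ) * ‖x - y‖ + (1 / 2 : ℝ) * (S * (2 * (C_σ * C_σ)) * ‖x - y‖) := by
        refine add_le_add hbn ?_
        rw [norm_smul]
        have : ‖(1 / 2 : ℝ)‖ = (1 / 2 : ℝ) := by norm_num
        rw [this]
        exact mul_le_mul_of_nonneg_left (hFLip x y) (by norm_num)
    _ = ((L_b : ℝ) + S * (C_σ * C_σ)) * ‖x - y‖ := by ring
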